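/- arXiv:2101.01816 — 6 statements merged into one kernel-verified Lean document; each statement's English description precedes it below -/
import Mathlib

section
/- Let R be a strictly proper scoring rule bounded in [0,1] and n ≥ 2. For any forecaster i with belief p_i in [0,1], any fixed reports y_j in [0,1] for j ≠ i, and any report y ≠ p_i, the expected ELF selection probability E_{X~Bernoulli(p_i)}[f_i(y_1,...,y,...,y_n,X)] is strictly less than E_{X~Bernoulli(p_i)}[f_i(y_1,...,p_i,...,y_n,X)]. That is, truthful reporting strictly maximizes forecaster i's expected probability of being selected by ELF. -/
open Finset

/-- The ELF selection probability of forecaster `i`. -/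
noncomputable def elfProb (n : ℕ) (R : ℝ → Bool → ℝ) (y : Fin n → ℝ) (x : Bool)
    (i : Fin n) : ℝ :=
  1 / n + (1 / n) * (R (y i) x - (1 / (n - 1)) * ∑ j ∈ univ.erase i, R (y j) x)

/-- ELF is strictly incentive compatible: for a strictly proper scoring rule `R`
bounded in `[0,1]`, a forecaster `i` with belief `p ∈ [0,1]`, fixed reports of the
others, and any misreport `y' ≠ p`, the expected (over `X ~ Bernoulli(p)`) ELF
selection probability under `y'` is strictly less than under the truthful report `p`. -/
theorem elf_strictly_incentive_compatible (n : ℕ) (hn : 2 ≤ n)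
    (R : ℝ → Bool → ℝ)
    (hbdd : ∀ y ∈ Set.Icc (0:ℝ) 1, ∀ x : Bool, R y x ∈ Set.Icc (0:ℝ) 1)
    (hproper : ∀ p ∈ Set.Icc (0:ℝ) 1, ∀ y ∈ Set.Icc (0:ℝ) 1, y ≠ p →
      p * R p true + (1 - p) * R p false > p * R y true + (1 - p) * R y false)
    (i : Fin n) (p : ℝ) (hp : p ∈ Set.Icc (0:ℝ) 1)
    (y : Fin n → ℝ) (hy : ∀ j, y j ∈ Set.Icc (0:ℝ) 1)
    (y' : ℝ) (hy' : y' ∈ Set.Icc (0:ℝ) 1) (hne : y' ≠ p) :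
    p * elfProb n R (Function.update y i y') true i
      + (1 - p) * elfProb n R (Function.update y i y') false i
    < p * elfProb n R (Function.update y i p) true i
      + (1 - p) * elfProb n R (Function.update y i p) false i := by
  have hsum : ∀ (v : ℝ) (x : Bool),
      ∑ j ∈ univ.erase i, R (Function.update y i v j) x
        = ∑ j ∈ univ.erase i, R (y j) x := by
    intro v x
    refine Finset.sum_congr rfl fun j hj => ?_
    rw [Function.update_of_ne (Finset.ne_of_mem_erase hj)]
  have key := hproper p hp y' hy' hne
  have hn' : (0:ℝ) < 1 / n := by
    have : (0:ℝ) < n := by positivity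
    positivity
  simp only [elfProb, Function.update_self, hsum]
  nlinarith [key, hn']
end

section
/- Under ELF with m events, the probability that forecaster i is selected, given true joint distribution θ over outcomes, equals 1/n + (1/n)(R(y_i,θ) - (1/(n-1))·Σ_{j≠i} R(y_j,θ)), where R(y_i,θ) denotes the expected average score of forecaster i. Consequently, forecaster i is selected with strictly higher probability than forecaster j if and only if R(y_i,θ) > R(y_j,θ). -/
open Finset

/-- Multi-event ELF selection probability of forecaster `i` given outcomes `x`. -/
noncomputable def elfMultiProb (n m : ℕ) (R : ℝ → Bool → ℝ)
    (y : Fin n → Fin m → ℝ) (x : Fin m → Bool) (i : Fin n) : ℝ :=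
  (1 / m) * ∑ k, (1 / n + (1 / n) *
    (R (y i k) (x k) - (1 / (n - 1)) * ∑ j ∈ univ.erase i, R (y j k) (x k)))

/-- Expected average score of forecaster `i` under joint outcome distribution `θ`. -/
noncomputable def expScore (n m : ℕ) (R : ℝ → Bool → ℝ)
    (y : Fin n → Fin m → ℝ) (θ : (Fin m → Bool) → ℝ) (i : Fin n) : ℝ :=
  ∑ x : Fin m → Bool, θ x * ((1 / m) * ∑ k, R (y i k) (x k))

/-- Under ELF, the probability that forecaster `i` is selected given the true joint
distribution `θ` equals `1/n + (1/n)(R(y_i,θ) - (1/(n-1)) ∑_{j≠i} R(y_j,θ))`;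
consequently, `i` is selected with strictly higher probability than `j` iff
`R(y_i,θ) > R(y_j,θ)` (rank accuracy). -/
theorem elf_rank_accuracy (n m : ℕ) (hn : 2 ≤ n) (hm : 1 ≤ m)
    (R : ℝ → Bool → ℝ)
    (hR : ∀ y ∈ Set.Icc (0:ℝ) 1, ∀ x : Bool, R y x ∈ Set.Icc (0:ℝ) 1)
    (y : Fin n → Fin m → ℝ) (hy : ∀ i k, y i k ∈ Set.Icc (0:ℝ) 1)
    (θ : (Fin m → Bool) → ℝ) (hθ0 : ∀ x, 0 ≤ θ x) (hθ1 : ∑ x, θ x = 1) :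
    (∀ i : Fin n,
      ∑ x : Fin m → Bool, θ x * elfMultiProb n m R y x i =
        1 / n + (1 / n) * (expScore n m R y θ i
          - (1 / (n - 1)) * ∑ j ∈ univ.erase i, expScore n m R y θ j)) ∧
    (∀ i j : Fin n,
      expScore n m R y θ i > expScore n m R y θ j ↔
        ∑ x : Fin m → Bool, θ x * elfMultiProb n m R y x i >
        ∑ x : Fin m → Bool, θ x * elfMultiProb n m R y x j) := by
  have hm0 : (m:ℝ) ≠ 0 := Nat.cast_ne_zero.mpr (by omega)
  have hn2 : (2:ℝ) ≤ (n:ℝ) := by exact_mod_cast hn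
  have hn0 : (n:ℝ) ≠ 0 := by linarith
  have hne1 : ((n:ℝ) - 1) ≠ 0 := by linarith
  set A : (Fin m → Bool) → Fin n → ℝ :=
    fun x i => (1 / m) * ∑ k, R (y i k) (x k) with hA
  have helf : ∀ (x : Fin m → Bool) (i : Fin n),
      elfMultiProb n m R y x i =
        1 / n + (1 / n) * (A x i - (1 / ((n:ℝ) - 1)) * ∑ j ∈ univ.erase i, A x j) := by
    intro x i
    have h1 : ∑ j ∈ univ.erase i, A x j
        = (1/(m:ℝ)) * ∑ k, ∑ j ∈ univ.erase i, R (y j k) (x k) := by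
      simp only [hA, ← Finset.mul_sum]
      rw [Finset.sum_comm]
    have h2 : ∑ k : Fin m, (1/(n:ℝ) + (1/(n:ℝ)) *
          (R (y i k) (x k) - (1/((n:ℝ)-1)) * ∑ j ∈ univ.erase i, R (y j k) (x k)))
        = (m:ℝ) * (1/(n:ℝ)) + (1/(n:ℝ)) * ((∑ k, R (y i k) (x k))
            - (1/((n:ℝ)-1)) * ∑ k, ∑ j ∈ univ.erase i, R (y j k) (x k)) := by
      rw [Finset.sum_add_distrib, Finset.sum_const, Finset.card_fin, nsmul_eq_mul,
        ← Finset.mul_sum, Finset.sum_sub_distrib, ← Finset.mul_sum]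
    show (1/(m:ℝ)) * _ = _
    rw [h2, h1]
    simp only [hA]
    field_simp
  have hSdef : ∀ j : Fin n, expScore n m R y θ j = ∑ x : Fin m → Bool, θ x * A x j :=
    fun j => rfl
  have key : ∀ i : Fin n,
      ∑ x : Fin m → Bool, θ x * elfMultiProb n m R y x i =
        1 / n + (1 / n) * (expScore n m R y θ i
          - (1 / ((n:ℝ) - 1)) * ∑ j ∈ univ.erase i, expScore n m R y θ j) := by
    intro i
    have hswap : ∑ x : Fin m → Bool, θ x * ∑ j ∈ univ.erase i, A x j
        = ∑ j ∈ univ.erase i, ∑ x : Fin m → Bool, θ x * A x j := by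
      simp only [Finset.mul_sum]; exact Finset.sum_comm
    calc ∑ x : Fin m → Bool, θ x * elfMultiProb n m R y x i
        = ∑ x : Fin m → Bool, (θ x * (1/n) + (1/n) * (θ x * A x i)
            - (1/n) * (1/((n:ℝ)-1)) * (θ x * ∑ j ∈ univ.erase i, A x j)) := by
          refine Finset.sum_congr rfl fun x _ => ?_
          rw [helf]; ring
      _ = (∑ x : Fin m → Bool, θ x) * (1/n)
            + (1/n) * (∑ x : Fin m → Bool, θ x * A x i)
            - (1/n) * (1/((n:ℝ)-1)) * (∑ x : Fin m → Bool,
                θ x * ∑ j ∈ univ.erase i, A x j) := by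
          rw [Finset.sum_sub_distrib, Finset.sum_add_distrib, ← Finset.sum_mul,
            ← Finset.mul_sum, ← Finset.mul_sum]
      _ = 1 / n + (1 / n) * (expScore n m R y θ i
            - (1 / ((n:ℝ) - 1)) * ∑ j ∈ univ.erase i, expScore n m R y θ j) := by
          rw [hθ1, hswap, hSdef i]
          simp only [hSdef]
          ring
  refine ⟨key, ?_⟩
  intro i j
  have hn1 : (1:ℝ) ≤ (n:ℝ) - 1 := by
    have : (2:ℝ) ≤ (n:ℝ) := by exact_mod_cast hn
    linarith
  have herase : ∀ i : Fin n, ∑ j ∈ univ.erase i, expScore n m R y θ j =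
      (∑ j, expScore n m R y θ j) - expScore n m R y θ i := by
    intro i; rw [Finset.sum_erase_eq_sub (Finset.mem_univ i)]
  rw [key i, key j, herase, herase]
  set Si := expScore n m R y θ i
  set Sj := expScore n m R y θ j
  set T := ∑ j, expScore n m R y θ j
  have hne : ((n:ℝ) - 1) ≠ 0 := by linarith
  have hnpos : (0:ℝ) < (n:ℝ) := by
    have : (2:ℝ) ≤ (n:ℝ) := by exact_mod_cast hn
    linarith
  have hdiff : (1/(n:ℝ) + (1/(n:ℝ)) * (Si - (1/((n:ℝ)-1)) * (T - Si))) -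
      (1/(n:ℝ) + (1/(n:ℝ)) * (Sj - (1/((n:ℝ)-1)) * (T - Sj))) = (Si - Sj) / ((n:ℝ)-1) := by
    field_simp
    ring
  constructor <;> intro h
  · have : (0:ℝ) < (Si - Sj) / ((n:ℝ)-1) := div_pos (by linarith) (by linarith)
    linarith [hdiff]
  · have h2 : (0:ℝ) < (Si - Sj) / ((n:ℝ)-1) := by linarith [hdiff]
    have := (div_pos_iff.mp h2)
    rcases this with ⟨h3,_⟩|⟨_,h4⟩
    · linarith
    · linarith
end

section
/- Under IELF with m independent events, the difference in the expected number of events won by the most accurate forecaster i and by any other forecaster j satisfies E[Z_i] - E[Z_j] = m·(R(y_i,θ) - R(y_j,θ))/(n-1) ≥ mΔ/(n-1), where Δ is the minimum gap between i's expected average score and any other forecaster's. -/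
open Finset

/-- Per-event ELF win probability of forecaster `i` on event `k` given outcome `x`. -/
noncomputable def eventWinProb (n m : ℕ) (R : ℝ → Bool → ℝ)
    (y : Fin n → Fin m → ℝ) (k : Fin m) (x : Bool) (i : Fin n) : ℝ :=
  1 / n + (1 / n) * (R (y i k) x - (1 / (n - 1)) * ∑ j ∈ univ.erase i, R (y j k) x)

/-- Expected number of events won by forecaster `i` under independent events with
Bernoulli parameters `θ k`. -/
noncomputable def expWins (n m : ℕ) (R : ℝ → Bool → ℝ)
    (y : Fin n → Fin m → ℝ) (θ : Fin m → ℝ) (i : Fin n) : ℝ :=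
  ∑ k, (θ k * eventWinProb n m R y k true i + (1 - θ k) * eventWinProb n m R y k false i)

/-- Expected average score of forecaster `i`. -/
noncomputable def expAvgScore (n m : ℕ) (R : ℝ → Bool → ℝ)
    (y : Fin n → Fin m → ℝ) (θ : Fin m → ℝ) (i : Fin n) : ℝ :=
  (1 / m) * ∑ k, (θ k * R (y i k) true + (1 - θ k) * R (y i k) false)

lemma winprob_diff (n m : ℕ) (hn : 2 ≤ n) (R : ℝ → Bool → ℝ)
    (y : Fin n → Fin m → ℝ) (k : Fin m) (x : Bool) (i j : Fin n) (hij : j ≠ i) :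
    eventWinProb n m R y k x i - eventWinProb n m R y k x j =
      (R (y i k) x - R (y j k) x) / (n - 1) := by
  have hn0 : (n : ℝ) ≠ 0 := by positivity
  have hn1 : (n : ℝ) - 1 ≠ 0 := by
    have : (2:ℝ) ≤ n := by exact_mod_cast hn
    linarith
  have hi : ∑ l ∈ univ.erase i, R (y l k) x = (∑ l, R (y l k) x) - R (y i k) x :=
    Finset.sum_erase_eq_sub (mem_univ i)
  have hj : ∑ l ∈ univ.erase j, R (y l k) x = (∑ l, R (y l k) x) - R (y j k) x :=
    Finset.sum_erase_eq_sub (mem_univ j)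
  simp only [eventWinProb, hi, hj]
  field_simp
  ring

/-- Under IELF, the expected number of events won by the most accurate forecaster
`i` exceeds that of any other forecaster `j` by exactly
`m (R(y_i,θ) - R(y_j,θ)) / (n-1) ≥ m Δ / (n-1)`. -/
theorem ielf_expected_wins_gap (n m : ℕ) (hn : 2 ≤ n) (hm : 1 ≤ m)
    (R : ℝ → Bool → ℝ)
    (hR : ∀ y ∈ Set.Icc (0:ℝ) 1, ∀ x : Bool, R y x ∈ Set.Icc (0:ℝ) 1)
    (y : Fin n → Fin m → ℝ) (hy : ∀ i k, y i k ∈ Set.Icc (0:ℝ) 1)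
    (θ : Fin m → ℝ) (hθ : ∀ k, θ k ∈ Set.Icc (0:ℝ) 1)
    (i : Fin n) (Δ : ℝ) (hΔ : 0 < Δ)
    (hgap : ∀ j, j ≠ i → expAvgScore n m R y θ i - expAvgScore n m R y θ j ≥ Δ) :
    ∀ j, j ≠ i →
      expWins n m R y θ i - expWins n m R y θ j =
        m * (expAvgScore n m R y θ i - expAvgScore n m R y θ j) / (n - 1) ∧
      expWins n m R y θ i - expWins n m R y θ j ≥ m * Δ / (n - 1) := by
  intro j hj
  have hm0 : (m : ℝ) ≠ 0 := by positivity
  have hn1 : (0:ℝ) < (n : ℝ) - 1 := by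
    have : (2:ℝ) ≤ n := by exact_mod_cast hn
    linarith
  have key : expWins n m R y θ i - expWins n m R y θ j =
      m * (expAvgScore n m R y θ i - expAvgScore n m R y θ j) / (n - 1) := by
    unfold expWins expAvgScore
    rw [← Finset.sum_sub_distrib]
    have : ∀ k : Fin m,
        (θ k * eventWinProb n m R y k true i + (1 - θ k) * eventWinProb n m R y k false i) -
        (θ k * eventWinProb n m R y k true j + (1 - θ k) * eventWinProb n m R y k false j) =
        ((θ k * R (y i k) true + (1 - θ k) * R (y i k) false) -
         (θ k * R (y j k) true + (1 - θ k) * R (y j k) false)) / (n - 1) := by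
      intro k
      have ht := winprob_diff n m hn R y k true i j hj
      have hf := winprob_diff n m hn R y k false i j hj
      have : θ k * (eventWinProb n m R y k true i - eventWinProb n m R y k true j)
          + (1 - θ k) * (eventWinProb n m R y k false i - eventWinProb n m R y k false j)
          = θ k * ((R (y i k) true - R (y j k) true) / (n-1))
          + (1 - θ k) * ((R (y i k) false - R (y j k) false) / (n-1)) := by rw [ht, hf]
      field_simp at this ⊢
      linarith
    rw [Finset.sum_congr rfl (fun k _ => this k), ← Finset.sum_div,
      Finset.sum_sub_distrib]
    field_simp
  refine ⟨key, ?_⟩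
  rw [key]
  have hgapj := hgap j hj
  have hmpos : (0:ℝ) < m := by positivity
  gcongr
end

section
/- Under IELF with m independent binary events, if Δ > 0 is the accuracy gap between the most accurate forecaster i and all others, then for each j ≠ i the probability that j wins at least as many events as i is at most 2·exp(-mΔ²/(2(n-1)²)), and hence IELF selects forecaster i with probability at least 1 - 2(n-1)·exp(-mΔ²/(2(n-1)²)). -/
open MeasureTheory Real ProbabilityTheory


private lemma hoeff_core (p : ℝ) (hp0 : 0 ≤ p) (hp1 : p ≤ 1) (t : ℝ) :
    1 - p + p * Real.exp t ≤ Real.exp (t * p + t ^ 2 / 8) := by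
  set g : ℝ → ℝ := fun s => 1 - p + p * Real.exp s with hgdef
  have hgpos : ∀ s, 0 < g s := by
    intro s
    rcases eq_or_lt_of_le hp0 with h | h
    · simp [hgdef, ← h]
    · have : 0 < p * Real.exp s := mul_pos h (exp_pos s)
      have : 0 ≤ 1 - p := by linarith
      simp only [hgdef]; nlinarith [exp_pos s]
  set φ : ℝ → ℝ := fun s => s * p + s ^ 2 / 8 - Real.log (g s) with hφdef
  set D : ℝ → ℝ := fun s => p + s / 4 - p * Real.exp s / g s with hDdef
  have hg' : ∀ s, HasDerivAt g (p * Real.exp s) s := by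
    intro s
    exact ((Real.hasDerivAt_exp s).const_mul p).const_add (1 - p)
  have hφ' : ∀ s, HasDerivAt φ (D s) s := by
    intro s
    have h1 : HasDerivAt (fun s : ℝ => s * p) p s := by
      simpa using (hasDerivAt_id s).mul_const p
    have h2 : HasDerivAt (fun s : ℝ => s ^ 2 / 8) (s / 4) s := by
      have := (hasDerivAt_pow 2 s).div_const 8
      exact this.congr_deriv (by norm_num; ring)
    have h3 : HasDerivAt (fun s => Real.log (g s)) (p * Real.exp s / g s) s :=
      (hg' s).log (hgpos s).ne'
    exact (h1.add h2).sub h3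
  have hD' : ∀ s, HasDerivAt D (1 / 4 - p * Real.exp s * (1 - p) / (g s) ^ 2) s := by
    intro s
    have h1 : HasDerivAt (fun s : ℝ => p + s / 4) (1 / 4) s := by
      simpa using ((hasDerivAt_id s).div_const 4).const_add p
    have h2 : HasDerivAt (fun s => p * Real.exp s / g s)
        ((p * Real.exp s * g s - p * Real.exp s * (p * Real.exp s)) / (g s) ^ 2) s :=
      ((Real.hasDerivAt_exp s).const_mul p).div (hg' s) (hgpos s).ne'
    have heq : (p * Real.exp s * g s - p * Real.exp s * (p * Real.exp s)) / (g s) ^ 2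
        = p * Real.exp s * (1 - p) / (g s) ^ 2 := by
      congr 1; simp only [hgdef]; ring
    rw [heq] at h2
    exact h1.sub h2
  have hD'nonneg : ∀ s, 0 ≤ 1 / 4 - p * Real.exp s * (1 - p) / (g s) ^ 2 := by
    intro s
    have hsq : 0 < (g s) ^ 2 := pow_pos (hgpos s) 2
    rw [sub_nonneg, div_le_iff₀ hsq]
    have hgs : g s = 1 - p + p * Real.exp s := rfl
    rw [hgs]
    nlinarith [sq_nonneg (p * Real.exp s - (1 - p))]
  have hDmono : Monotone D := by
    apply monotone_of_deriv_nonneg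
    · exact fun s => (hD' s).differentiableAt
    · intro s; rw [(hD' s).deriv]; exact hD'nonneg s
  have hD0 : D 0 = 0 := by
    simp only [hDdef, hgdef]
    simp
  have hφ0 : φ 0 = 0 := by
    simp only [hφdef, hgdef]
    simp
  have hφnonneg : 0 ≤ φ t := by
    rcases le_total 0 t with ht | ht
    · have hmono : MonotoneOn φ (Set.Ici (0:ℝ)) := by
        apply monotoneOn_of_deriv_nonneg (convex_Ici 0)
        · exact (Continuous.continuousOn (by
            fun_prop (disch := intro x; exact (hgpos x).ne')))
        · intro x hx
          exact (hφ' x).differentiableAt.differentiableWithinAt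
        · intro x hx
          rw [(hφ' x).deriv]
          rw [← hD0]
          exact hDmono (le_of_lt (by simpa using hx))
      have := hmono (Set.self_mem_Ici) (Set.mem_Ici.mpr ht) ht
      rwa [hφ0] at this
    · have hmono : AntitoneOn φ (Set.Iic (0:ℝ)) := by
        apply antitoneOn_of_deriv_nonpos (convex_Iic 0)
        · exact (Continuous.continuousOn (by
            fun_prop (disch := intro x; exact (hgpos x).ne')))
        · intro x hx
          exact (hφ' x).differentiableAt.differentiableWithinAt
        · intro x hx
          rw [(hφ' x).deriv]
          rw [← hD0]
          exact hDmono (le_of_lt (by simpa using hx))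
      have := hmono (Set.mem_Iic.mpr ht) (Set.self_mem_Iic) ht
      rwa [hφ0] at this
  have hlog : Real.log (g t) ≤ t * p + t ^ 2 / 8 := by
    have : 0 ≤ t * p + t ^ 2 / 8 - Real.log (g t) := hφnonneg
    linarith
  calc 1 - p + p * Real.exp t = g t := rfl
    _ = Real.exp (Real.log (g t)) := (Real.exp_log (hgpos t)).symm
    _ ≤ Real.exp (t * p + t ^ 2 / 8) := exp_le_exp.mpr hlog



lemma hoeff_mgf {Ω : Type*} [MeasurableSpace Ω] (μ : Measure Ω) [IsProbabilityMeasure μ]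
    (X : Ω → ℝ) (hX : Measurable X) (hb : ∀ ω, X ω ∈ Set.Icc (0:ℝ) 1) (t : ℝ) :
    mgf X μ t ≤ Real.exp (t * (∫ ω, X ω ∂μ) + t ^ 2 / 8) := by
  have hXint : Integrable X μ := by
    refine (integrable_const (1:ℝ)).mono' hX.aestronglyMeasurable ?_
    exact ae_of_all _ fun ω => by
      have h := hb ω
      rw [Real.norm_eq_abs, abs_le]; constructor <;> [linarith [h.1]; exact h.2]
  set p := ∫ ω, X ω ∂μ with hp
  have hp0 : 0 ≤ p := integral_nonneg fun ω => (hb ω).1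
  have hp1 : p ≤ 1 := by
    have := integral_mono hXint (integrable_const (1:ℝ)) (fun ω => (hb ω).2)
    simpa using this
  have hpt : ∀ ω, Real.exp (t * X ω) ≤ 1 - X ω + X ω * Real.exp t := by
    intro ω
    have hx := hb ω
    have hcv := convexOn_exp.2 (Set.mem_univ (0:ℝ)) (Set.mem_univ t)
      (by linarith [hx.2] : (0:ℝ) ≤ 1 - X ω) hx.1 (by ring)
    simp only [smul_eq_mul, mul_zero, zero_add, Real.exp_zero, mul_one] at hcv
    calc Real.exp (t * X ω) = Real.exp (X ω * t) := by rw [mul_comm]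
      _ ≤ (1 - X ω) * 1 + X ω * Real.exp t := by simpa using hcv
      _ = 1 - X ω + X ω * Real.exp t := by ring
  have hint1 : Integrable (fun ω => Real.exp (t * X ω)) μ := by
    refine (integrable_const (Real.exp |t|)).mono'
      ((hX.const_mul t).exp.aestronglyMeasurable) ?_
    exact ae_of_all _ fun ω => by
      rw [Real.norm_eq_abs, Real.abs_exp]
      apply Real.exp_le_exp.mpr
      calc t * X ω ≤ |t * X ω| := le_abs_self _
        _ = |t| * |X ω| := abs_mul t (X ω)
        _ ≤ |t| * 1 := by
            apply mul_le_mul_of_nonneg_left _ (abs_nonneg t)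
            rw [abs_le]; exact ⟨by linarith [(hb ω).1], (hb ω).2⟩
        _ = |t| := mul_one _
  have hint2 : Integrable (fun ω => 1 - X ω + X ω * Real.exp t) μ :=
    ((integrable_const (1:ℝ)).sub hXint).add (hXint.mul_const _)
  have hmono : mgf X μ t ≤ ∫ ω, (1 - X ω + X ω * Real.exp t) ∂μ :=
    integral_mono hint1 hint2 hpt
  have heq : ∫ ω, (1 - X ω + X ω * Real.exp t) ∂μ = 1 - p + p * Real.exp t := by
    have h1 : Integrable (fun ω => 1 - X ω) μ := (integrable_const (1:ℝ)).sub hXint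
    have h2 : Integrable (fun ω => X ω * Real.exp t) μ := hXint.mul_const _
    rw [integral_add h1 h2, integral_sub (integrable_const (1:ℝ)) hXint,
      integral_mul_const, integral_const]
    simp [hp]
  rw [heq] at hmono
  exact hmono.trans (hoeff_core p hp0 hp1 t)



section
variable {Ω : Type*} [MeasurableSpace Ω] (μ : Measure Ω) [IsProbabilityMeasure μ]
  (m : ℕ) (Y : Fin m → Ω → ℝ)

lemma sum_mgf_le (hm : 1 ≤ m) (hmeas : ∀ k, Measurable (Y k))
    (hbdd : ∀ k ω, Y k ω ∈ Set.Icc (0:ℝ) 1)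
    (hind : iIndepFun Y μ) (t : ℝ) :
    mgf (∑ k, Y k) μ t ≤
      Real.exp (t * (∫ ω, (∑ k, Y k) ω ∂μ) + m * t ^ 2 / 8) := by
  have hYint : ∀ k, Integrable (Y k) μ := fun k => by
    refine (integrable_const (1:ℝ)).mono' (hmeas k).aestronglyMeasurable ?_
    exact ae_of_all _ fun ω => by
      have h := hbdd k ω
      rw [Real.norm_eq_abs, abs_le]; exact ⟨by linarith [h.1], h.2⟩
  have hES : ∫ ω, (∑ k, Y k) ω ∂μ = ∑ k, ∫ ω, Y k ω ∂μ := by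
    simp_rw [Finset.sum_apply]
    exact integral_finset_sum _ fun k _ => hYint k
  rw [hind.mgf_sum hmeas Finset.univ, hES]
  calc ∏ k, mgf (Y k) μ t
      ≤ ∏ k, Real.exp (t * (∫ ω, Y k ω ∂μ) + t ^ 2 / 8) :=
        Finset.prod_le_prod (fun k _ => mgf_nonneg)
          (fun k _ => hoeff_mgf μ (Y k) (hmeas k) (hbdd k) t)
    _ = Real.exp (∑ k, (t * (∫ ω, Y k ω ∂μ) + t ^ 2 / 8)) := by
        rw [← Real.exp_sum]
    _ = Real.exp (t * (∑ k, ∫ ω, Y k ω ∂μ) + m * t ^ 2 / 8) := by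
        congr 1
        rw [Finset.sum_add_distrib, Finset.mul_sum]
        simp [Finset.sum_const, Finset.card_univ]
        ring

lemma sum_exp_integrable (hmeas : ∀ k, Measurable (Y k))
    (hbdd : ∀ k ω, Y k ω ∈ Set.Icc (0:ℝ) 1) (t : ℝ) :
    Integrable (fun ω => Real.exp (t * (∑ k, Y k) ω)) μ := by
  refine (integrable_const (Real.exp (|t| * m))).mono' ?_ ?_
  · have hS : Measurable (fun ω => ∑ k, Y k ω) :=
      Finset.measurable_sum _ fun k _ => hmeas k
    have heq : (fun ω => Real.exp (t * (∑ k, Y k) ω))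
        = fun ω => Real.exp (t * ∑ k, Y k ω) := by
      funext ω; rw [Finset.sum_apply]
    rw [heq]
    exact ((hS.const_mul t).exp).aestronglyMeasurable
  · refine ae_of_all _ fun ω => ?_
    rw [Real.norm_eq_abs, Real.abs_exp]
    apply Real.exp_le_exp.mpr
    have h1 : |(∑ k, Y k) ω| ≤ m := by
      rw [Finset.sum_apply, abs_le]
      constructor
      · have : (0:ℝ) ≤ ∑ k, Y k ω := Finset.sum_nonneg fun k _ => (hbdd k ω).1
        have hm' : (0:ℝ) ≤ (m:ℝ) := Nat.cast_nonneg m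
        linarith
      · calc ∑ k, Y k ω ≤ ∑ _k : Fin m, (1:ℝ) :=
              Finset.sum_le_sum fun k _ => (hbdd k ω).2
          _ = m := by simp
    calc t * (∑ k, Y k) ω ≤ |t * (∑ k, Y k) ω| := le_abs_self _
      _ = |t| * |(∑ k, Y k) ω| := abs_mul _ _
      _ ≤ |t| * m := mul_le_mul_of_nonneg_left h1 (abs_nonneg t)

lemma hoeff_upper (hm : 1 ≤ m) (hmeas : ∀ k, Measurable (Y k))
    (hbdd : ∀ k ω, Y k ω ∈ Set.Icc (0:ℝ) 1)
    (hind : iIndepFun Y μ) (c : ℝ) (hc : 0 ≤ c) :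
    (μ {ω | (∫ ω', (∑ k, Y k) ω' ∂μ) + c ≤ (∑ k, Y k) ω}).toReal ≤
      Real.exp (-2 * c ^ 2 / m) := by
  have hmpos : (0:ℝ) < m := by exact_mod_cast hm
  set lam := 4 * c / m with hlam
  have hlam0 : 0 ≤ lam := by positivity
  have hint := sum_exp_integrable μ m Y hmeas hbdd lam
  have h := measure_ge_le_exp_mul_mgf ((∫ ω', (∑ k, Y k) ω' ∂μ) + c) hlam0 hint
  refine h.trans ?_
  calc Real.exp (-lam * ((∫ ω', (∑ k, Y k) ω' ∂μ) + c)) * mgf (∑ k, Y k) μ lam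
      ≤ Real.exp (-lam * ((∫ ω', (∑ k, Y k) ω' ∂μ) + c)) *
          Real.exp (lam * (∫ ω', (∑ k, Y k) ω' ∂μ) + m * lam ^ 2 / 8) := by
        apply mul_le_mul_of_nonneg_left
          (sum_mgf_le μ m Y hm hmeas hbdd hind lam) (Real.exp_nonneg _)
    _ = Real.exp (-lam * c + m * lam ^ 2 / 8) := by
        rw [← Real.exp_add]; congr 1; ring
    _ = Real.exp (-2 * c ^ 2 / m) := by
        congr 1
        rw [hlam]
        field_simp
        ring

lemma hoeff_lower (hm : 1 ≤ m) (hmeas : ∀ k, Measurable (Y k))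
    (hbdd : ∀ k ω, Y k ω ∈ Set.Icc (0:ℝ) 1)
    (hind : iIndepFun Y μ) (c : ℝ) (hc : 0 ≤ c) :
    (μ {ω | (∑ k, Y k) ω ≤ (∫ ω', (∑ k, Y k) ω' ∂μ) - c}).toReal ≤
      Real.exp (-2 * c ^ 2 / m) := by
  have hmpos : (0:ℝ) < m := by exact_mod_cast hm
  set lam := -(4 * c / m) with hlam
  have hlam0 : lam ≤ 0 := by rw [hlam]; exact neg_nonpos.mpr (by positivity)
  have hint := sum_exp_integrable μ m Y hmeas hbdd lam
  have h := measure_le_le_exp_mul_mgf ((∫ ω', (∑ k, Y k) ω' ∂μ) - c) hlam0 hint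
  refine h.trans ?_
  calc Real.exp (-lam * ((∫ ω', (∑ k, Y k) ω' ∂μ) - c)) * mgf (∑ k, Y k) μ lam
      ≤ Real.exp (-lam * ((∫ ω', (∑ k, Y k) ω' ∂μ) - c)) *
          Real.exp (lam * (∫ ω', (∑ k, Y k) ω' ∂μ) + m * lam ^ 2 / 8) := by
        apply mul_le_mul_of_nonneg_left
          (sum_mgf_le μ m Y hm hmeas hbdd hind lam) (Real.exp_nonneg _)
    _ = Real.exp (lam * c + m * lam ^ 2 / 8) := by
        rw [← Real.exp_add]; congr 1; ring
    _ = Real.exp (-2 * c ^ 2 / m) := by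
        congr 1
        rw [hlam]
        field_simp
        ring

end


/-- Under IELF with `m` independent events, the probability that any `j ≠ i` wins
at least as many events as the most accurate forecaster `i` is at most
`2 exp(-mΔ²/(2(n-1)²))`; hence IELF (which can only select a forecaster winning
at least as many events as `i`) selects `i` with probability at least
`1 - 2(n-1) exp(-mΔ²/(2(n-1)²))`. -/
theorem ielf_selects_best_with_high_probability
    {Ω : Type*} [MeasurableSpace Ω] (μ : Measure Ω) [IsProbabilityMeasure μ]
    (n m : ℕ) (hn : 2 ≤ n) (hm : 1 ≤ m)
    (W : Fin n → Fin m → Ω → ℝ)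
    (hWmeas : ∀ i k, Measurable (W i k))
    (hWbdd : ∀ i k ω, W i k ω ∈ Set.Icc (0:ℝ) 1)
    (hindep : ∀ i, ProbabilityTheory.iIndepFun (W i) μ)
    (Z : Fin n → Ω → ℝ) (hZ : ∀ i ω, Z i ω = ∑ k, W i k ω)
    (i : Fin n) (Δ : ℝ) (hΔ : 0 < Δ)
    (hgap : ∀ j, j ≠ i → (∫ ω, Z i ω ∂μ) - (∫ ω, Z j ω ∂μ) ≥ m * Δ / (n - 1))
    (sel : Ω → Fin n) (hselMeas : ∀ j, MeasurableSet {ω | sel ω = j})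
    (hsel : ∀ ω, ∀ j, sel ω = j → j ≠ i → Z i ω ≤ Z j ω) :
    (∀ j, j ≠ i → (μ {ω | Z i ω ≤ Z j ω}).toReal ≤
        2 * Real.exp (-(m * Δ ^ 2) / (2 * (n - 1) ^ 2))) ∧
    (μ {ω | sel ω = i}).toReal ≥
      1 - 2 * (n - 1) * Real.exp (-(m * Δ ^ 2) / (2 * (n - 1) ^ 2)) := by
  have hn2 : (2:ℝ) ≤ (n:ℝ) := by exact_mod_cast hn
  have hn1 : (0:ℝ) < (n:ℝ) - 1 := by linarith
  have hmpos : (0:ℝ) < (m:ℝ) := by exact_mod_cast hm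
  set c : ℝ := (m:ℝ) * Δ / (2 * ((n:ℝ) - 1)) with hc_def
  have hc : 0 < c := by
    apply div_pos (mul_pos hmpos hΔ) (by linarith)
  have h2c : 2 * c = (m:ℝ) * Δ / ((n:ℝ) - 1) := by
    rw [hc_def]; field_simp
  have hexp_eq : -2 * c ^ 2 / (m:ℝ) = -((m:ℝ) * Δ ^ 2) / (2 * ((n:ℝ) - 1) ^ 2) := by
    rw [hc_def]; field_simp
  have hZfun : ∀ j, Z j = ∑ k, W j k := fun j =>
    funext fun ω => by rw [hZ]; exact (Finset.sum_apply _ _ _).symm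
  have key : ∀ j, j ≠ i → (μ {ω | Z i ω ≤ Z j ω}).toReal ≤
      2 * Real.exp (-((m:ℝ) * Δ ^ 2) / (2 * ((n:ℝ) - 1) ^ 2)) := by
    intro j hj
    have hA := hoeff_upper μ m (W j) hm (hWmeas j) (hWbdd j) (hindep j) c hc.le
    have hB := hoeff_lower μ m (W i) hm (hWmeas i) (hWbdd i) (hindep i) c hc.le
    rw [← hZfun j] at hA
    rw [← hZfun i] at hB
    set A := {ω | (∫ ω', Z j ω' ∂μ) + c ≤ Z j ω} with hA_def
    set B := {ω | Z i ω ≤ (∫ ω', Z i ω' ∂μ) - c} with hB_def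
    have hincl : {ω | Z i ω ≤ Z j ω} ⊆ A ∪ B := by
      intro ω hω
      simp only [Set.mem_setOf_eq] at hω
      by_contra hcon
      simp only [Set.mem_union, hA_def, hB_def, Set.mem_setOf_eq, not_or, not_le] at hcon
      obtain ⟨hA', hB'⟩ := hcon
      have hgap' := hgap j hj
      rw [← h2c] at hgap'
      linarith
    have hμle : μ {ω | Z i ω ≤ Z j ω} ≤ μ A + μ B :=
      (measure_mono hincl).trans (measure_union_le A B)
    calc (μ {ω | Z i ω ≤ Z j ω}).toReal
        ≤ (μ A + μ B).toReal := ENNReal.toReal_mono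
          (ENNReal.add_ne_top.mpr ⟨measure_ne_top μ A, measure_ne_top μ B⟩) hμle
      _ = (μ A).toReal + (μ B).toReal :=
          ENNReal.toReal_add (measure_ne_top μ A) (measure_ne_top μ B)
      _ ≤ Real.exp (-2 * c ^ 2 / m) + Real.exp (-2 * c ^ 2 / m) := add_le_add hA hB
      _ = 2 * Real.exp (-((m:ℝ) * Δ ^ 2) / (2 * ((n:ℝ) - 1) ^ 2)) := by
          rw [hexp_eq]; ring
  refine ⟨key, ?_⟩
  set S := {ω | sel ω = i} with hS_def
  have hcompl : Sᶜ ⊆ ⋃ j ∈ Finset.univ.erase i, {ω | Z i ω ≤ Z j ω} := by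
    intro ω hω
    simp only [hS_def, Set.mem_compl_iff, Set.mem_setOf_eq] at hω
    exact Set.mem_iUnion₂.mpr ⟨sel ω, Finset.mem_erase.mpr ⟨hω, Finset.mem_univ _⟩,
      hsel ω (sel ω) rfl hω⟩
  have hsum : μ Sᶜ ≤ ∑ j ∈ Finset.univ.erase i, μ {ω | Z i ω ≤ Z j ω} :=
    (measure_mono hcompl).trans (measure_biUnion_finset_le _ _)
  have hsum_ne : (∑ j ∈ Finset.univ.erase i, μ {ω | Z i ω ≤ Z j ω}) ≠ ⊤ :=
    (ENNReal.sum_lt_top.mpr fun j _ => measure_lt_top μ _).ne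
  have hcard : ((Finset.univ.erase i).card : ℝ) = (n:ℝ) - 1 := by
    rw [Finset.card_erase_of_mem (Finset.mem_univ i), Finset.card_univ, Fintype.card_fin,
      Nat.cast_sub (by omega), Nat.cast_one]
  have hcompl_le : (μ Sᶜ).toReal ≤
      ((n:ℝ) - 1) * (2 * Real.exp (-((m:ℝ) * Δ ^ 2) / (2 * ((n:ℝ) - 1) ^ 2))) := by
    calc (μ Sᶜ).toReal
        ≤ (∑ j ∈ Finset.univ.erase i, μ {ω | Z i ω ≤ Z j ω}).toReal :=
          ENNReal.toReal_mono hsum_ne hsum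
      _ = ∑ j ∈ Finset.univ.erase i, (μ {ω | Z i ω ≤ Z j ω}).toReal :=
          ENNReal.toReal_sum fun j _ => measure_ne_top μ _
      _ ≤ ∑ _j ∈ Finset.univ.erase i,
            (2 * Real.exp (-((m:ℝ) * Δ ^ 2) / (2 * ((n:ℝ) - 1) ^ 2))) :=
          Finset.sum_le_sum fun j hjmem =>
            key j (Finset.mem_erase.mp hjmem).1
      _ = ((n:ℝ) - 1) * (2 * Real.exp (-((m:ℝ) * Δ ^ 2) / (2 * ((n:ℝ) - 1) ^ 2))) := by
          rw [Finset.sum_const, nsmul_eq_mul, hcard]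
  have hadd : (μ S).toReal + (μ Sᶜ).toReal = 1 := by
    rw [← ENNReal.toReal_add (measure_ne_top _ _) (measure_ne_top _ _),
      measure_add_measure_compl (hselMeas i)]
    simp
  have : (μ S).toReal = 1 - (μ Sᶜ).toReal := by linarith
  rw [hS_def] at this ⊢ 
  rw [this]
  linarith [hcompl_le]
end

section
/- If Π_i(y_1,y_2,x) = 1/2 + R(y_i,x) - R(y_{3-i},x) defines a wagering mechanism with payments in [0,1] for a strictly proper scoring rule R, then the rescaled rule R'(y,x) = 2(R(y,x) + β(x)) with β(0) = -R(1,0), β(1) = -R(0,1) is strictly proper, takes values in [0,1], and satisfies Π_i(y_1,y_2,x) = 1/2 + (1/2)(R'(y_i,x) - R'(y_{3-i},x)). -/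
/-- If `Π_i(y₁,y₂,x) = 1/2 + R(y_i,x) - R(y_{3-i},x)` has payments in `[0,1]` for a
strictly proper scoring rule `R`, then `R'(y,x) = 2(R(y,x) + β(x))` with
`β(0) = -R(1,0)`, `β(1) = -R(0,1)` is strictly proper, takes values in `[0,1]`, and
satisfies `Π_i = 1/2 + (1/2)(R'(y_i,x) - R'(y_{3-i},x))`. -/
theorem rescale_to_normalized_rule (R : ℝ → Bool → ℝ)
    (hproper : ∀ p ∈ Set.Icc (0:ℝ) 1, ∀ y ∈ Set.Icc (0:ℝ) 1, y ≠ p →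
      p * R p true + (1 - p) * R p false > p * R y true + (1 - p) * R y false)
    (hpay : ∀ y₁ ∈ Set.Icc (0:ℝ) 1, ∀ y₂ ∈ Set.Icc (0:ℝ) 1, ∀ x : Bool,
      1 / 2 + R y₁ x - R y₂ x ∈ Set.Icc (0:ℝ) 1) :
    let R' : ℝ → Bool → ℝ := fun y x => 2 * (R y x + (if x then -(R 0 true) else -(R 1 false)))
    (∀ p ∈ Set.Icc (0:ℝ) 1, ∀ y ∈ Set.Icc (0:ℝ) 1, y ≠ p →
      p * R' p true + (1 - p) * R' p false > p * R' y true + (1 - p) * R' y false) ∧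
    (∀ y ∈ Set.Icc (0:ℝ) 1, ∀ x : Bool, R' y x ∈ Set.Icc (0:ℝ) 1) ∧
    (∀ y₁ ∈ Set.Icc (0:ℝ) 1, ∀ y₂ ∈ Set.Icc (0:ℝ) 1, ∀ x : Bool,
      1 / 2 + R y₁ x - R y₂ x = 1 / 2 + (1 / 2) * (R' y₁ x - R' y₂ x)) := by
  intro R'
  have h0mem : (0:ℝ) ∈ Set.Icc (0:ℝ) 1 := by norm_num
  have h1mem : (1:ℝ) ∈ Set.Icc (0:ℝ) 1 := by norm_num
  -- R 0 true is the minimum of R · true on [0,1]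
  have min_t : ∀ y ∈ Set.Icc (0:ℝ) 1, R 0 true ≤ R y true := by
    intro y hy
    by_cases hy0 : y = 0
    · subst hy0; exact le_rfl
    · have h0 := hproper 0 h0mem y hy hy0
      have h1 := hproper y hy 0 h0mem (fun h => hy0 h.symm)
      nlinarith [hy.1, hy.2, mul_nonneg (by linarith [hy.2] : (0:ℝ) ≤ 1 - y)
        (by nlinarith : (0:ℝ) ≤ R 0 false - R y false)]
  -- R 1 false is the minimum of R · false on [0,1]
  have min_f : ∀ y ∈ Set.Icc (0:ℝ) 1, R 1 false ≤ R y false := by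
    intro y hy
    by_cases hy1 : y = 1
    · subst hy1; exact le_rfl
    · have h0 := hproper 1 h1mem y hy hy1
      have h1 := hproper y hy 1 h1mem (fun h => hy1 h.symm)
      nlinarith [hy.1, hy.2, mul_nonneg hy.1
        (by nlinarith : (0:ℝ) ≤ R 1 true - R y true)]
  refine ⟨?_, ?_, ?_⟩
  · intro p hp y hy hne
    have h := hproper p hp y hy hne
    simp only [R', if_true, if_false, Bool.false_eq_true]
    nlinarith
  · intro y hy x
    cases x
    · have h := hpay y hy 1 h1mem false
      have hmin := min_f y hy
      simp only [Set.mem_Icc] at h ⊢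
      simp only [R', Bool.false_eq_true, if_false]
      constructor <;> linarith [h.1, h.2]
    · have h := hpay y hy 0 h0mem true
      have hmin := min_t y hy
      simp only [Set.mem_Icc] at h ⊢
      simp only [R', if_true]
      constructor <;> linarith [h.1, h.2]
  · intro y₁ _ y₂ _ x
    cases x <;> simp only [R', if_true, if_false, Bool.false_eq_true] <;> ring
end

section
/- Proper scoring rule selection violates incentive compatibility: with n ≥ 2 forecasters and m events, for any strictly proper scoring rule R, there exist a belief vector p_i and a joint distribution D over outcomes and others' reports with E_D[X] = p_i such that truthfully reporting p_i gives forecaster i selection probability 0.2 under the highest-total-score mechanism, while misreporting y'_i = (0.5,...,0.5,1) gives selection probability 0.8. -/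
open Finset

/-- The forecaster with the highest total score, ties broken by (least) index. -/
noncomputable def selectMax {n : ℕ} [NeZero n] (s : Fin n → ℝ) : Fin n :=
  (univ.filter (fun i => ∀ j, s j ≤ s i)).min' (by
    obtain ⟨i, -, hi⟩ := Finset.exists_max_image (univ : Finset (Fin n)) s
      ⟨0, Finset.mem_univ _⟩
    exact ⟨i, Finset.mem_filter.mpr ⟨Finset.mem_univ _, fun j => hi j (Finset.mem_univ _)⟩⟩)

lemma selectMax_eq_zero_iff {n : ℕ} [NeZero n] (s : Fin n → ℝ) :
    selectMax s = 0 ↔ ∀ j, s j ≤ s 0 := by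
  constructor
  · intro h j
    have hm : selectMax s ∈ univ.filter (fun i => ∀ j, s j ≤ s i) := Finset.min'_mem _ _
    rw [h, Finset.mem_filter] at hm
    exact hm.2 j
  · intro h
    have h0 : (0 : Fin n) ∈ univ.filter (fun i => ∀ j, s j ≤ s i) :=
      Finset.mem_filter.mpr ⟨Finset.mem_univ _, h⟩
    exact le_antisymm (Finset.min'_le _ _ h0) (Fin.zero_le _)

lemma score_le_iff {n m : ℕ} [NeZero n] (last : Fin m) (F : Fin n → Fin m → ℝ)
    (h : ∀ (j : Fin n) (k : Fin m), k ≠ last → F j k = F 0 k) (j : Fin n) :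
    (∑ k, F j k) ≤ (∑ k, F 0 k) ↔ F j last ≤ F 0 last := by
  have key : ∑ k, F j k - ∑ k, F 0 k = F j last - F 0 last := by
    rw [← Finset.add_sum_erase _ (F j) (Finset.mem_univ last),
        ← Finset.add_sum_erase _ (F 0) (Finset.mem_univ last),
        Finset.sum_congr rfl (fun k hk => h j k (Finset.ne_of_mem_erase hk))]
    ring
  constructor <;> intro <;> linarith

/-- Selecting the forecaster with the highest total proper score violates incentive
compatibility: for any strictly proper scoring rule `R`, `n ≥ 2` forecasters and
`m ≥ 1` events, there are a belief vector `p`, a joint distribution `D` over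
outcomes and others' reports with `E_D[X] = p`, and the misreport
`y' = (0.5, …, 0.5, 1)`, such that truthfully reporting `p` gives forecaster `i`
selection probability `0.2` while misreporting `y'` gives `0.8`. -/
theorem proper_score_selection_not_IC (n m : ℕ) (hn : 2 ≤ n) (hm : 1 ≤ m)
    (R : ℝ → Bool → ℝ)
    (hproper : ∀ p ∈ Set.Icc (0:ℝ) 1, ∀ y ∈ Set.Icc (0:ℝ) 1, y ≠ p →
      p * R p true + (1 - p) * R p false > p * R y true + (1 - p) * R y false) :
    haveI : NeZero n := ⟨by omega⟩
    ∃ (i : Fin n) (p : Fin m → ℝ)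
      (D : ((Fin m → Bool) × (Fin n → Fin m → ℝ)) →₀ ℝ),
      let y' : Fin m → ℝ := fun k => if (k : ℕ) = m - 1 then 1 else 0.5
      let selProb : (Fin m → ℝ) → ℝ := fun r =>
        D.sum (fun ω v => v *
          (if selectMax (fun j => ∑ k, R (Function.update ω.2 i r j k) (ω.1 k)) = i
            then 1 else 0))
      (∀ k, p k ∈ Set.Icc (0:ℝ) 1) ∧
      (∀ ω, 0 ≤ D ω) ∧
      D.sum (fun _ v => v) = 1 ∧
      (∀ ω ∈ D.support, ∀ j k, ω.2 j k ∈ Set.Icc (0:ℝ) 1) ∧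
      (∀ k, D.sum (fun ω v => v * (if ω.1 k then 1 else 0)) = p k) ∧
      y' ≠ p ∧
      selProb p = 0.2 ∧ selProb y' = 0.8 := by
  haveI : NeZero n := ⟨by omega⟩
  -- strict properness consequences
  have h1 : ∀ y ∈ Set.Icc (0:ℝ) 1, y ≠ 1 → R y true < R 1 true := by
    intro y hy hne
    have := hproper 1 (by norm_num) y hy hne
    nlinarith
  have h0 : ∀ y ∈ Set.Icc (0:ℝ) 1, y ≠ 0 → R y false < R 0 false := by
    intro y hy hne
    have := hproper 0 (by norm_num) y hy hne
    nlinarith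
  set last : Fin m := ⟨m - 1, by omega⟩ with hlastdef
  have hlastval : (last : ℕ) = m - 1 := rfl
  set pr : Fin m → ℝ := fun k => if (k:ℕ) = m - 1 then 0.8 else 0.5 with hpr
  set y' : Fin m → ℝ := fun k => if (k : ℕ) = m - 1 then 1 else 0.5 with hy'
  set rep : ℝ → Fin n → Fin m → ℝ := fun a _ k => if (k:ℕ) = m - 1 then a else 0.5 with hrep
  set bA : Fin m → Bool := fun _ => true with hbA
  set bB : Fin m → Bool := fun k => decide ((k:ℕ) = m - 1) with hbB
  set bC : Fin m → Bool := fun k => decide ((k:ℕ) ≠ m - 1) with hbC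
  set bD : Fin m → Bool := fun _ => false with hbD
  set D : ((Fin m → Bool) × (Fin n → Fin m → ℝ)) →₀ ℝ :=
    Finsupp.single (bA, rep 0.8) 0.1 + Finsupp.single (bB, rep 0.8) 0.1 +
    Finsupp.single (bA, rep 1) 0.3 + Finsupp.single (bB, rep 1) 0.3 +
    Finsupp.single (bC, rep 0) 0.1 + Finsupp.single (bD, rep 0) 0.1 with hD
  have Dsum : ∀ g : ((Fin m → Bool) × (Fin n → Fin m → ℝ)) → ℝ,
      D.sum (fun ω v => v * g ω) =
        0.1 * g (bA, rep 0.8) + 0.1 * g (bB, rep 0.8) + 0.3 * g (bA, rep 1) +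
        0.3 * g (bB, rep 1) + 0.1 * g (bC, rep 0) + 0.1 * g (bD, rep 0) := by
    intro g
    have hz : ∀ (a : (Fin m → Bool) × (Fin n → Fin m → ℝ)) (b : ℝ),
        (Finsupp.single a b).sum (fun ω v => v * g ω) = b * g a :=
      fun a b => Finsupp.sum_single_index (zero_mul _)
    rw [hD]
    rw [Finsupp.sum_add_index' (fun a => zero_mul (g a)) (fun a b1 b2 => add_mul b1 b2 (g a)),
        Finsupp.sum_add_index' (fun a => zero_mul (g a)) (fun a b1 b2 => add_mul b1 b2 (g a)),
        Finsupp.sum_add_index' (fun a => zero_mul (g a)) (fun a b1 b2 => add_mul b1 b2 (g a)),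
        Finsupp.sum_add_index' (fun a => zero_mul (g a)) (fun a b1 b2 => add_mul b1 b2 (g a)),
        Finsupp.sum_add_index' (fun a => zero_mul (g a)) (fun a b1 b2 => add_mul b1 b2 (g a)),
        hz, hz, hz, hz, hz, hz]
  -- basic facts about lasts
  have hbAl : bA last = true := rfl
  have hbBl : bB last = true := by simp [hbB, hlastval]
  have hbCl : bC last = false := by simp [hbC, hlastval]
  have hbDl : bD last = false := rfl
  have hprlast : pr last = 0.8 := by simp [hpr, hlastval]
  have hy'last : y' last = 1 := by simp [hy', hlastval]
  have hpr' : ∀ k : Fin m, k ≠ last → pr k = 0.5 := by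
    intro k hk
    have hk' : (k : ℕ) ≠ m - 1 := fun h => hk (Fin.ext (h.trans hlastval.symm))
    simp [hpr, hk']
  have hy'' : ∀ k : Fin m, k ≠ last → y' k = 0.5 := by
    intro k hk
    have hk' : (k : ℕ) ≠ m - 1 := fun h => hk (Fin.ext (h.trans hlastval.symm))
    simp [hy', hk']
  -- the selection criterion
  have hsel : ∀ (a : ℝ) (r0 : Fin m → ℝ), (∀ k : Fin m, k ≠ last → r0 k = 0.5) →
      ∀ b : Fin m → Bool,
      (selectMax (fun j => ∑ k, R (Function.update (rep a) 0 r0 j k) (b k)) = 0 ↔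
        R a (b last) ≤ R (r0 last) (b last)) := by
    intro a r0 hr0 b
    rw [selectMax_eq_zero_iff]
    have hone : (⟨1, by omega⟩ : Fin n) ≠ 0 := by
      intro h
      have := congrArg Fin.val h
      simp at this
    have hF : ∀ (j : Fin n) (k : Fin m), k ≠ last →
        R (Function.update (rep a) 0 r0 j k) (b k) =
          R (Function.update (rep a) 0 r0 0 k) (b k) := by
      intro j k hk
      have hk' : (k : ℕ) ≠ m - 1 := fun h => hk (Fin.ext (h.trans hlastval.symm))
      rcases eq_or_ne j 0 with hj | hj
      · rw [hj]
      · rw [Function.update_of_ne hj, Function.update_self, hr0 k hk]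
        simp [hrep, hk']
    have hlast0 : Function.update (rep a) 0 r0 0 last = r0 last := by
      rw [Function.update_self]
    have hlastj : ∀ j : Fin n, j ≠ 0 → Function.update (rep a) 0 r0 j last = a := by
      intro j hj
      rw [Function.update_of_ne hj]
      simp [hrep, hlastval]
    constructor
    · intro h
      have hj1 := (score_le_iff last _ hF ⟨1, by omega⟩).mp (h ⟨1, by omega⟩)
      rwa [hlast0, hlastj _ hone] at hj1
    · intro h j
      rw [score_le_iff last _ hF j, hlast0]
      rcases eq_or_ne j 0 with hj | hj
      · rw [hj, hlast0]
      · rw [hlastj j hj]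
        exact h
  -- winners and losers under truthful report pr
  have wp1 : selectMax (fun j => ∑ k, R (Function.update (rep 0.8) 0 pr j k) (bA k)) = 0 :=
    (hsel 0.8 pr hpr' bA).mpr (by rw [hprlast])
  have wp2 : selectMax (fun j => ∑ k, R (Function.update (rep 0.8) 0 pr j k) (bB k)) = 0 :=
    (hsel 0.8 pr hpr' bB).mpr (by rw [hprlast])
  have lp3 : ¬ selectMax (fun j => ∑ k, R (Function.update (rep 1) 0 pr j k) (bA k)) = 0 := by
    rw [hsel 1 pr hpr' bA, hprlast, hbAl]
    exact not_le.mpr (h1 0.8 (by norm_num) (by norm_num))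
  have lp4 : ¬ selectMax (fun j => ∑ k, R (Function.update (rep 1) 0 pr j k) (bB k)) = 0 := by
    rw [hsel 1 pr hpr' bB, hprlast, hbBl]
    exact not_le.mpr (h1 0.8 (by norm_num) (by norm_num))
  have lp5 : ¬ selectMax (fun j => ∑ k, R (Function.update (rep 0) 0 pr j k) (bC k)) = 0 := by
    rw [hsel 0 pr hpr' bC, hprlast, hbCl]
    exact not_le.mpr (h0 0.8 (by norm_num) (by norm_num))
  have lp6 : ¬ selectMax (fun j => ∑ k, R (Function.update (rep 0) 0 pr j k) (bD k)) = 0 := by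
    rw [hsel 0 pr hpr' bD, hprlast, hbDl]
    exact not_le.mpr (h0 0.8 (by norm_num) (by norm_num))
  -- winners and losers under misreport y'
  have wy1 : selectMax (fun j => ∑ k, R (Function.update (rep 0.8) 0 y' j k) (bA k)) = 0 :=
    (hsel 0.8 y' hy'' bA).mpr
      (by rw [hy'last, hbAl]; exact le_of_lt (h1 0.8 (by norm_num) (by norm_num)))
  have wy2 : selectMax (fun j => ∑ k, R (Function.update (rep 0.8) 0 y' j k) (bB k)) = 0 :=
    (hsel 0.8 y' hy'' bB).mpr
      (by rw [hy'last, hbBl]; exact le_of_lt (h1 0.8 (by norm_num) (by norm_num)))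
  have wy3 : selectMax (fun j => ∑ k, R (Function.update (rep 1) 0 y' j k) (bA k)) = 0 :=
    (hsel 1 y' hy'' bA).mpr (by rw [hy'last])
  have wy4 : selectMax (fun j => ∑ k, R (Function.update (rep 1) 0 y' j k) (bB k)) = 0 :=
    (hsel 1 y' hy'' bB).mpr (by rw [hy'last])
  have ly5 : ¬ selectMax (fun j => ∑ k, R (Function.update (rep 0) 0 y' j k) (bC k)) = 0 := by
    rw [hsel 0 y' hy'' bC, hy'last, hbCl]
    exact not_le.mpr (h0 1 (by norm_num) (by norm_num))
  have ly6 : ¬ selectMax (fun j => ∑ k, R (Function.update (rep 0) 0 y' j k) (bD k)) = 0 := by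
    rw [hsel 0 y' hy'' bD, hy'last, hbDl]
    exact not_le.mpr (h0 1 (by norm_num) (by norm_num))
  -- the eight conditions
  have c1 : ∀ k, pr k ∈ Set.Icc (0:ℝ) 1 := by
    intro k
    rw [hpr]
    constructor <;> [skip; skip] <;> dsimp only <;> split_ifs <;> norm_num
  have c2 : ∀ ω, 0 ≤ D ω := by
    intro ω
    rw [hD]
    simp only [Finsupp.add_apply, Finsupp.single_apply]
    split_ifs <;> norm_num
  have c3 : D.sum (fun _ v => v) = 1 := by
    have he : (fun (ω : (Fin m → Bool) × (Fin n → Fin m → ℝ)) (v : ℝ) => v) =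
        (fun ω v => v * (1:ℝ)) := by funext ω v; ring
    rw [he, Dsum]
    norm_num
  have c4 : ∀ ω ∈ D.support, ∀ j k, ω.2 j k ∈ Set.Icc (0:ℝ) 1 := by
    have claim : ∀ ω, D ω ≠ 0 → ω.2 = rep 0.8 ∨ ω.2 = rep 1 ∨ ω.2 = rep 0 := by
      intro ω hω
      by_contra hc
      push_neg at hc
      apply hω
      rw [hD]
      simp only [Finsupp.add_apply, Finsupp.single_apply]
      rw [if_neg (fun h => hc.1 (congrArg Prod.snd h).symm),
          if_neg (fun h => hc.1 (congrArg Prod.snd h).symm),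
          if_neg (fun h => hc.2.1 (congrArg Prod.snd h).symm),
          if_neg (fun h => hc.2.1 (congrArg Prod.snd h).symm),
          if_neg (fun h => hc.2.2 (congrArg Prod.snd h).symm),
          if_neg (fun h => hc.2.2 (congrArg Prod.snd h).symm)]
      norm_num
    intro ω hω j k
    rcases claim ω (Finsupp.mem_support_iff.mp hω) with h | h | h <;> rw [h] <;>
      simp only [hrep] <;> split_ifs <;> norm_num
  have c5 : ∀ k, D.sum (fun ω v => v * (if ω.1 k then 1 else 0)) = pr k := by
    intro k
    rw [Dsum]
    by_cases hk : (k:ℕ) = m - 1 <;>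
      simp [hbA, hbB, hbC, hbD, hpr, hk] <;> norm_num
  have c6 : y' ≠ pr := by
    intro h
    have := congrFun h last
    rw [hy'last, hprlast] at this
    norm_num at this
  have c7 : D.sum (fun ω v => v *
      (if selectMax (fun j => ∑ k, R (Function.update ω.2 0 pr j k) (ω.1 k)) = 0
        then 1 else 0)) = 0.2 := by
    rw [Dsum]
    simp only
    rw [if_pos wp1, if_pos wp2, if_neg lp3, if_neg lp4, if_neg lp5, if_neg lp6]
    norm_num
  have c8 : D.sum (fun ω v => v *
      (if selectMax (fun j => ∑ k, R (Function.update ω.2 0 y' j k) (ω.1 k)) = 0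
        then 1 else 0)) = 0.8 := by
    rw [Dsum]
    simp only
    rw [if_pos wy1, if_pos wy2, if_pos wy3, if_pos wy4, if_neg ly5, if_neg ly6]
    norm_num
  exact ⟨0, pr, D, c1, c2, c3, c4, c5, c6, c7, c8⟩
end
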